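/- Let A, B ∈ M_n(ℂ), and let A = S + N be a Jordan–Chevalley decomposition of A (S diagonalizable, N nilpotent, SN = NS). If [A,[A,B]] = 0, then [S, B] = 0. -/

import Mathlib

open Matrix

/-- A complex square matrix is diagonalizable (semisimple) if it is conjugate to a
diagonal matrix. -/
def Matrix.IsDiagonalizable {n : ℕ} (A : Matrix (Fin n) (Fin n) ℂ) : Prop :=
  ∃ P : Matrix (Fin n) (Fin n) ℂ, IsUnit P ∧ (P * A * P⁻¹).IsDiag

section aux

variable {n : ℕ}

attribute [local instance 100] LieRing.ofAssociativeRing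

private lemma diag_mul_apply {S B : Matrix (Fin n) (Fin n) ℂ} (hS : S.IsDiag) (i j : Fin n) :
    (S * B) i j = S i i * B i j := by
  rw [Matrix.mul_apply]
  exact Finset.sum_eq_single i (fun k _ hk => by rw [hS hk.symm, zero_mul])
    (fun hi => absurd (Finset.mem_univ i) hi)

private lemma mul_diag_apply {S B : Matrix (Fin n) (Fin n) ℂ} (hS : S.IsDiag) (i j : Fin n) :
    (B * S) i j = B i j * S j j := by
  rw [Matrix.mul_apply]
  exact Finset.sum_eq_single j (fun k _ hk => by rw [hS hk, mul_zero])
    (fun hj => absurd (Finset.mem_univ j) hj)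

private lemma ad_pow_entry {S : Matrix (Fin n) (Fin n) ℂ} (hS : S.IsDiag)
    (X : Matrix (Fin n) (Fin n) ℂ) (m : ℕ) (i j : Fin n) :
    ((LieAlgebra.ad ℂ (Matrix (Fin n) (Fin n) ℂ) S ^ m) X) i j
      = (S i i - S j j) ^ m * X i j := by
  induction m with
  | zero => simp
  | succ m ih =>
    rw [pow_succ', Module.End.mul_apply]
    set Y := (LieAlgebra.ad ℂ (Matrix (Fin n) (Fin n) ℂ) S ^ m) X with hY
    have h1 : (LieAlgebra.ad ℂ (Matrix (Fin n) (Fin n) ℂ) S Y) i j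
        = (S i i - S j j) * Y i j := by
      rw [LieAlgebra.ad_apply, Ring.lie_def, Matrix.sub_apply,
        diag_mul_apply hS, mul_diag_apply hS]
      ring
    rw [h1, ih, pow_succ']
    ring

private lemma key {n : ℕ} (B S N : Matrix (Fin n) (Fin n) ℂ) (hSd : S.IsDiag)
    (hN : IsNilpotent N) (hSN : S * N = N * S)
    (h : ⁅S + N, ⁅S + N, B⁆⁆ = 0) : ⁅S, B⁆ = 0 := by
  obtain ⟨k, hk⟩ := LieAlgebra.ad_nilpotent_of_nilpotent (R := ℂ) hN
  set D := LieAlgebra.ad ℂ (Matrix (Fin n) (Fin n) ℂ) S with hDdef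
  set M := LieAlgebra.ad ℂ (Matrix (Fin n) (Fin n) ℂ) N with hMdef
  set T := D + M with hTdef
  have hcomm : Commute D M := by
    have h0 : ⁅S, N⁆ = (0 : Matrix (Fin n) (Fin n) ℂ) := by
      rw [Ring.lie_def, hSN, sub_self]
    have h1 := LieHom.map_lie (LieAlgebra.ad ℂ (Matrix (Fin n) (Fin n) ℂ)) S N
    rw [h0, map_zero, Ring.lie_def] at h1
    exact sub_eq_zero.mp h1.symm
  have hT2 : (T * T) B = 0 := by
    have hTad : T = LieAlgebra.ad ℂ (Matrix (Fin n) (Fin n) ℂ) (S + N) :=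
      (map_add _ _ _).symm
    rw [Module.End.mul_apply, hTad, LieAlgebra.ad_apply, LieAlgebra.ad_apply]
    exact h
  have key0 : ∀ m, 2 ≤ m → (T ^ m) B = 0 := by
    intro m hm
    obtain ⟨r, rfl⟩ : ∃ r, m = r + 2 := ⟨m - 2, by omega⟩
    rw [pow_add, Module.End.mul_apply, pow_two, hT2, map_zero]
  have keyM : ∀ j, k ≤ j → (M ^ j : Module.End ℂ (Matrix (Fin n) (Fin n) ℂ)) = 0 := by
    intro j hj
    obtain ⟨r, rfl⟩ : ∃ r, j = k + r := ⟨j - k, by omega⟩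
    rw [pow_add, hk, zero_mul]
  have hDpow : (D ^ (k + 1)) B = 0 := by
    have hcT : Commute T (-M) := (hcomm.add_left (Commute.refl M)).neg_right
    have hDeq : D = T + (-M) := (add_neg_cancel_right D M).symm
    rw [hDeq, hcT.add_pow, LinearMap.sum_apply]
    refine Finset.sum_eq_zero fun m hm => ?_
    by_cases h2 : 2 ≤ m
    · have hc : Commute (T ^ m) ((-M) ^ (k + 1 - m)) := hcT.pow_pow m _
      have hc2 : Commute (T ^ m)
          (((k + 1).choose m : Module.End ℂ (Matrix (Fin n) (Fin n) ℂ))) :=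
        (Nat.cast_commute _ _).symm
      rw [mul_assoc, (hc.mul_right hc2).eq, Module.End.mul_apply, key0 m h2, map_zero]
    · have hz : ((-M) ^ (k + 1 - m) : Module.End ℂ (Matrix (Fin n) (Fin n) ℂ)) = 0 := by
        rw [neg_pow, keyM _ (by omega), mul_zero]
      rw [hz, mul_zero, zero_mul, LinearMap.zero_apply]
  ext i j
  have h1 := ad_pow_entry hSd B (k + 1) i j
  rw [hDpow] at h1
  have h2 : (S i i - S j j) ^ (k + 1) * B i j = 0 := by rw [← h1]; rfl
  show ⁅S, B⁆ i j = (0 : Matrix (Fin n) (Fin n) ℂ) i j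
  rw [Ring.lie_def, Matrix.sub_apply, diag_mul_apply hSd, mul_diag_apply hSd,
    Matrix.zero_apply]
  rcases mul_eq_zero.mp h2 with hz | hz
  · have h3 : S i i = S j j :=
      sub_eq_zero.mp (pow_eq_zero_iff (n := k + 1) (by omega) |>.mp hz)
    rw [h3]; ring
  · rw [hz]; ring

end aux

/-- If `A = S + N` is a Jordan–Chevalley decomposition of `A` and `[A,[A,B]] = 0`,
then `[S, B] = 0`. -/
theorem lie_semisimplePart_eq_zero_of_lie_lie_eq_zero {n : ℕ}
    (A B S N : Matrix (Fin n) (Fin n) ℂ)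
    (hA : A = S + N) (hS : S.IsDiagonalizable) (hN : IsNilpotent N)
    (hSN : S * N = N * S) (h : ⁅A, ⁅A, B⁆⁆ = 0) :
    ⁅S, B⁆ = 0 := by
  obtain ⟨P, hP, hdiag⟩ := hS
  have hPd : IsUnit P.det := (Matrix.isUnit_iff_isUnit_det P).mp hP
  have hPQ : P * P⁻¹ = 1 := Matrix.mul_nonsing_inv P hPd
  have hQP : P⁻¹ * P = 1 := Matrix.nonsing_inv_mul P hPd
  have conj_mul : ∀ X Y : Matrix (Fin n) (Fin n) ℂ,
      (P * X * P⁻¹) * (P * Y * P⁻¹) = P * (X * Y) * P⁻¹ := by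
    intro X Y
    calc (P * X * P⁻¹) * (P * Y * P⁻¹) = P * X * (P⁻¹ * P) * Y * P⁻¹ := by
          noncomm_ring
      _ = P * (X * Y) * P⁻¹ := by rw [hQP]; noncomm_ring
  have conj_lie : ∀ X Y : Matrix (Fin n) (Fin n) ℂ,
      ⁅P * X * P⁻¹, P * Y * P⁻¹⁆ = P * ⁅X, Y⁆ * P⁻¹ := by
    intro X Y
    rw [Ring.lie_def, Ring.lie_def, conj_mul, conj_mul]
    noncomm_ring
  have hN' : IsNilpotent (P * N * P⁻¹) := by
    obtain ⟨k, hk⟩ := hN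
    refine ⟨k, ?_⟩
    have : ∀ m : ℕ, (P * N * P⁻¹) ^ m = P * N ^ m * P⁻¹ := by
      intro m
      induction m with
      | zero => simp [hPQ]
      | succ m ih => rw [pow_succ, ih, conj_mul, pow_succ]
    rw [this, hk, Matrix.mul_zero, Matrix.zero_mul]
  have hSN' : (P * S * P⁻¹) * (P * N * P⁻¹) = (P * N * P⁻¹) * (P * S * P⁻¹) := by
    rw [conj_mul, conj_mul, hSN]
  have h' : ⁅P * S * P⁻¹ + P * N * P⁻¹, ⁅P * S * P⁻¹ + P * N * P⁻¹, P * B * P⁻¹⁆⁆ = 0 := by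
    have hadd : P * S * P⁻¹ + P * N * P⁻¹ = P * A * P⁻¹ := by
      rw [hA]; noncomm_ring
    rw [hadd, conj_lie, conj_lie, h, Matrix.mul_zero, Matrix.zero_mul]
  have hfin := key (P * B * P⁻¹) (P * S * P⁻¹) (P * N * P⁻¹) hdiag hN' hSN' h'
  rw [conj_lie] at hfin
  calc ⁅S, B⁆ = (P⁻¹ * P) * ⁅S, B⁆ * (P⁻¹ * P) := by rw [hQP]; noncomm_ring
    _ = P⁻¹ * (P * ⁅S, B⁆ * P⁻¹) * P := by noncomm_ring
    _ = 0 := by rw [hfin, Matrix.mul_zero, Matrix.zero_mul]
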